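/- Let N = (G, c) be a flow network. For all A ⊆ Ein and all B1, B2 ⊆ Eout with B1 ∩ B2 = ∅: maxFromToAft_N(A, B1 | A, B2) = maxFromTo_N(A, B1 ∪ B2) − maxFromTo_N(A, B2). -/

import Mathlib

open Finset

/-- A flow network: a finite vertex set `V`, a finite edge set `E` partitioned into
input edges `Ein`, output edges `Eout` and internal edges `Eint`; each internal edge
has two distinct endpoints `tail e` and `head e` (with at most one internal edge per
`(tail, head)` pair), each input edge has a head only, each output edge a tail only
(values of `tail`/`head` outside their intended domains are irrelevant junk); and a
nonnegative upper-bound capacity `cap`. -/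
structure FlowNetwork (V E : Type) [Fintype V] [Fintype E]
    [DecidableEq V] [DecidableEq E] where
  Ein : Finset E
  Eout : Finset E
  Eint : Finset E
  cover : Ein ∪ Eout ∪ Eint = Finset.univ
  disj_in_out : Disjoint Ein Eout
  disj_in_int : Disjoint Ein Eint
  disj_out_int : Disjoint Eout Eint
  tail : E → V
  head : E → V
  no_self_loop : ∀ e ∈ Eint, tail e ≠ head e
  no_multi : ∀ e ∈ Eint, ∀ e' ∈ Eint, tail e = tail e' → head e = head e' → e = e'
  cap : E → ℝ
  cap_nonneg : ∀ e, 0 ≤ cap e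

namespace FlowNetwork

variable {V E : Type} [Fintype V] [Fintype E] [DecidableEq V] [DecidableEq E]

/-- A flow `f : E → ℝ≥0` is feasible if it conserves flow at every vertex and
respects the capacity of every edge. -/
def Feasible (N : FlowNetwork V E) (f : E → ℝ) : Prop :=
  (∀ e, 0 ≤ f e) ∧ (∀ e, f e ≤ N.cap e) ∧
  ∀ v : V,
    ∑ e ∈ (N.Ein ∪ N.Eint).filter (fun e => N.head e = v), f e =
    ∑ e ∈ (N.Eout ∪ N.Eint).filter (fun e => N.tail e = v), f e

/-- `maxFromTo N A B`: the supremum of `f(A)` over all feasible flows `f` that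
vanish on `(Ein \ A) ∪ (Eout \ B)`. -/
noncomputable def maxFromTo (N : FlowNetwork V E) (A B : Finset E) : ℝ :=
  sSup {x : ℝ | ∃ f : E → ℝ, N.Feasible f ∧
    (∀ e ∈ (N.Ein \ A) ∪ (N.Eout \ B), f e = 0) ∧ x = ∑ e ∈ A, f e}


/-- `maxFromToAftOut N A B1 B2` = `maxFromToAft N (A, B1 | A, B2)`: the supremum of
`f(B1)` over all pairs `(f, f')` of nonnegative functions with `f + f'` feasible,
`f'(A) = f'(B2) = maxFromTo N A B2`, and `f + f'` vanishing on
`(Ein \ A) ∪ (Eout \ (B1 ∪ B2))`. -/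
noncomputable def maxFromToAftOut (N : FlowNetwork V E) (A B1 B2 : Finset E) : ℝ :=
  sSup {x : ℝ | ∃ f f' : E → ℝ, (∀ e, 0 ≤ f e) ∧ (∀ e, 0 ≤ f' e) ∧
    N.Feasible (f + f') ∧
    ∑ e ∈ A, f' e = N.maxFromTo A B2 ∧ ∑ e ∈ B2, f' e = N.maxFromTo A B2 ∧
    (∀ e ∈ (N.Ein \ A) ∪ (N.Eout \ (B1 ∪ B2)), f e + f' e = 0) ∧
    x = ∑ e ∈ B1, f e}

section Aux

attribute [local instance] Classical.propDecidable

set_option linter.unusedSectionVars false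

variable {V E : Type} [Fintype V] [Fintype E] [DecidableEq V] [DecidableEq E]
variable (N : FlowNetwork V E)

lemma feasible_zero : N.Feasible (fun _ => 0) := by
  refine ⟨fun e => le_refl 0, fun e => N.cap_nonneg e, fun v => by simp⟩

/-- global conservation -/
lemma global_conserve {f : E → ℝ}
    (hf : ∀ v : V,
      ∑ e ∈ (N.Ein ∪ N.Eint).filter (fun e => N.head e = v), f e =
      ∑ e ∈ (N.Eout ∪ N.Eint).filter (fun e => N.tail e = v), f e) :
    ∑ e ∈ N.Ein, f e = ∑ e ∈ N.Eout, f e := by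
  have h1 : ∑ e ∈ N.Ein ∪ N.Eint, f e = ∑ e ∈ N.Eout ∪ N.Eint, f e := by
    rw [← Finset.sum_fiberwise (N.Ein ∪ N.Eint) N.head f,
        ← Finset.sum_fiberwise (N.Eout ∪ N.Eint) N.tail f]
    exact Finset.sum_congr rfl fun v _ => hf v
  rw [Finset.sum_union N.disj_in_int, Finset.sum_union N.disj_out_int] at h1
  linarith

lemma sum_eq_of_vanish {A s : Finset E} {f : E → ℝ} (hA : A ⊆ s)
    (h0 : ∀ e ∈ s \ A, f e = 0) : ∑ e ∈ s, f e = ∑ e ∈ A, f e := by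
  refine (Finset.sum_subset hA fun e he hne => h0 e ?_).symm
  exact Finset.mem_sdiff.2 ⟨he, hne⟩

/-- The set of feasible flows from `A` to `B`. -/
def FlowsTo (A B : Finset E) : Set (E → ℝ) :=
  {f | N.Feasible f ∧ ∀ e ∈ (N.Ein \ A) ∪ (N.Eout \ B), f e = 0}

lemma maxFromTo_eq (A B : Finset E) :
    N.maxFromTo A B = sSup ((fun f => ∑ e ∈ A, f e) '' N.FlowsTo A B) := by
  unfold maxFromTo
  congr 1
  ext x
  constructor
  · rintro ⟨f, h1, h2, h3⟩; exact ⟨f, ⟨h1, h2⟩, h3.symm⟩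
  · rintro ⟨f, ⟨h1, h2⟩, h3⟩; exact ⟨f, h1, h2, h3.symm⟩

lemma zero_mem_flowsTo (A B : Finset E) : (fun _ => (0:ℝ)) ∈ N.FlowsTo A B :=
  ⟨N.feasible_zero, fun _ _ => rfl⟩

lemma isCompact_flowsTo (A B : Finset E) : IsCompact (N.FlowsTo A B) := by
  have hsub : N.FlowsTo A B ⊆ Set.Icc (0 : E → ℝ) N.cap := by
    rintro f ⟨⟨h1, h2, _⟩, _⟩
    exact ⟨fun e => h1 e, fun e => h2 e⟩
  have hclosed : IsClosed (N.FlowsTo A B) := by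
    have : N.FlowsTo A B =
        (⋂ e : E, {f : E → ℝ | 0 ≤ f e}) ∩
        (⋂ e : E, {f : E → ℝ | f e ≤ N.cap e}) ∩
        (⋂ v : V, {f : E → ℝ |
          ∑ e ∈ (N.Ein ∪ N.Eint).filter (fun e => N.head e = v), f e =
          ∑ e ∈ (N.Eout ∪ N.Eint).filter (fun e => N.tail e = v), f e}) ∩
        (⋂ e ∈ (N.Ein \ A) ∪ (N.Eout \ B), {f : E → ℝ | f e = 0}) := by
      ext f
      simp only [FlowsTo, Feasible, Set.mem_inter_iff, Set.mem_iInter, Set.mem_setOf_eq]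
      tauto
    rw [this]
    refine IsClosed.inter (IsClosed.inter (IsClosed.inter ?_ ?_) ?_) ?_
    · exact isClosed_iInter fun e => isClosed_le continuous_const (continuous_apply e)
    · exact isClosed_iInter fun e => isClosed_le (continuous_apply e) continuous_const
    · refine isClosed_iInter fun v => isClosed_eq ?_ ?_ <;>
        exact continuous_finset_sum _ fun e _ => continuous_apply e
    · exact isClosed_iInter fun e => isClosed_iInter fun _ =>
        isClosed_eq (continuous_apply e) continuous_const
  exact isCompact_Icc.of_isClosed_subset hclosed hsub

lemma bddAbove_flowsTo_image (A B : Finset E) :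
    BddAbove ((fun f => ∑ e ∈ A, f e) '' N.FlowsTo A B) := by
  refine ⟨∑ e ∈ A, N.cap e, ?_⟩
  rintro x ⟨f, ⟨⟨_, h2, _⟩, _⟩, rfl⟩
  exact Finset.sum_le_sum fun e _ => h2 e

lemma le_maxFromTo {A B : Finset E} {f : E → ℝ} (hf : f ∈ N.FlowsTo A B) :
    ∑ e ∈ A, f e ≤ N.maxFromTo A B := by
  rw [maxFromTo_eq]
  exact le_csSup (N.bddAbove_flowsTo_image A B) ⟨f, hf, rfl⟩

lemma maxFromTo_nonneg (A B : Finset E) : 0 ≤ N.maxFromTo A B := by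
  simpa using N.le_maxFromTo (N.zero_mem_flowsTo A B)

lemma exists_max_flowsTo (A B : Finset E) :
    ∃ f ∈ N.FlowsTo A B, ∑ e ∈ A, f e = N.maxFromTo A B ∧
      ∀ g ∈ N.FlowsTo A B, ∑ e ∈ A, g e ≤ ∑ e ∈ A, f e := by
  obtain ⟨f, hf, hmax⟩ := (N.isCompact_flowsTo A B).exists_isMaxOn
    ⟨_, N.zero_mem_flowsTo A B⟩
    (Continuous.continuousOn (continuous_finset_sum _ fun e _ => continuous_apply e))
  refine ⟨f, hf, ?_, fun g hg => hmax hg⟩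
  rw [maxFromTo_eq]
  have : IsGreatest ((fun f => ∑ e ∈ A, f e) '' N.FlowsTo A B) (∑ e ∈ A, f e) := by
    constructor
    · exact ⟨f, hf, rfl⟩
    · rintro x ⟨g, hg, rfl⟩
      exact hmax hg
  exact (this.csSup_eq).symm ▸ rfl

end Aux

section Aux2

set_option linter.unusedSectionVars false
set_option maxHeartbeats 1000000

attribute [local instance] Classical.propDecidable

variable {V E : Type} [Fintype V] [Fintype E] [DecidableEq V] [DecidableEq E]
variable (N : FlowNetwork V E)

/-- Residual relation for a difference function `d`. -/
def Rel (d : E → ℝ) (u w : V) : Prop :=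
  ∃ e ∈ N.Eint, (N.tail e = u ∧ N.head e = w ∧ 0 < d e) ∨
    (N.tail e = w ∧ N.head e = u ∧ d e < 0)

/-- Along a residual path we can construct a rerouting function `θ`. -/
lemma exists_theta (d : E → ℝ) {v u : V} (h : Relation.ReflTransGen (N.Rel d) v u) :
    ∃ θ : E → ℝ, (∀ e, e ∉ N.Eint → θ e = 0) ∧ (∀ e, 0 < θ e → 0 < d e) ∧
      (∀ e, θ e < 0 → d e < 0) ∧
      ∀ w : V,
        ∑ e ∈ N.Eint.filter (fun e => N.head e = w), θ e -
        ∑ e ∈ N.Eint.filter (fun e => N.tail e = w), θ e =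
          (if u = w then (1:ℝ) else 0) - (if v = w then (1:ℝ) else 0) := by
  induction h using Relation.ReflTransGen.head_induction_on with
  | refl =>
      exact ⟨fun _ => 0, fun _ _ => rfl, fun e h => absurd h (lt_irrefl 0),
        fun e h => absurd h (lt_irrefl 0), fun w => by simp⟩
  | @head a c hrel hpath ih =>
      obtain ⟨θ, hz, hp, hn, hnet⟩ := ih
      obtain ⟨e₀, he₀, hcase⟩ := hrel
      rcases hcase with ⟨ht, hh, hd⟩ | ⟨ht, hh, hd⟩
      · -- forward edge a → c with 0 < d, push +1 on e₀
        refine ⟨fun e => θ e + (if e = e₀ then 1 else 0), ?_, ?_, ?_, ?_⟩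
        · intro e he
          have hne : e ≠ e₀ := fun h => he (h ▸ he₀)
          simp [hz e he, hne]
        · intro e he
          have he' : 0 < θ e + (if e = e₀ then (1:ℝ) else 0) := he
          by_cases h1 : e = e₀
          · exact h1 ▸ hd
          · rw [if_neg h1, add_zero] at he'; exact hp e he'
        · intro e he
          have he' : θ e + (if e = e₀ then (1:ℝ) else 0) < 0 := he
          by_cases h1 : e = e₀
          · rw [if_pos h1] at he'
            exact hn e (by linarith)
          · rw [if_neg h1, add_zero] at he'; exact hn e he'
        · intro w
          have hnet' := hnet w
          have hsum1 : ∀ s : Finset E, ∑ e ∈ s, (if e = e₀ then (1:ℝ) else 0) =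
              if e₀ ∈ s then 1 else 0 := fun s => Finset.sum_ite_eq' s e₀ (fun _ => 1)
          rw [Finset.sum_add_distrib, Finset.sum_add_distrib, hsum1, hsum1]
          have hmem1 : (e₀ ∈ N.Eint.filter (fun e => N.head e = w)) ↔ (c = w) := by
            simp [Finset.mem_filter, he₀, hh]
          have hmem2 : (e₀ ∈ N.Eint.filter (fun e => N.tail e = w)) ↔ (a = w) := by
            simp [Finset.mem_filter, he₀, ht]
          rw [if_congr hmem1 rfl rfl, if_congr hmem2 rfl rfl]
          linarith [hnet' ]
      · -- backward edge with tail = c, head = a, d < 0, push -1 on e₀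
        refine ⟨fun e => θ e - (if e = e₀ then 1 else 0), ?_, ?_, ?_, ?_⟩
        · intro e he
          have hne : e ≠ e₀ := fun h => he (h ▸ he₀)
          simp [hz e he, hne]
        · intro e he
          have he' : 0 < θ e - (if e = e₀ then (1:ℝ) else 0) := he
          by_cases h1 : e = e₀
          · rw [if_pos h1] at he'
            exact hp e (by linarith)
          · rw [if_neg h1, sub_zero] at he'; exact hp e he'
        · intro e he
          have he' : θ e - (if e = e₀ then (1:ℝ) else 0) < 0 := he
          by_cases h1 : e = e₀
          · exact h1 ▸ hd
          · rw [if_neg h1, sub_zero] at he'; exact hn e he'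
        · intro w
          have hnet' := hnet w
          have hsum1 : ∀ s : Finset E, ∑ e ∈ s, (if e = e₀ then (1:ℝ) else 0) =
              if e₀ ∈ s then 1 else 0 := fun s => Finset.sum_ite_eq' s e₀ (fun _ => 1)
          rw [Finset.sum_sub_distrib, Finset.sum_sub_distrib, hsum1, hsum1]
          have hmem1 : (e₀ ∈ N.Eint.filter (fun e => N.head e = w)) ↔ (a = w) := by
            simp [Finset.mem_filter, he₀, hh]
          have hmem2 : (e₀ ∈ N.Eint.filter (fun e => N.tail e = w)) ↔ (c = w) := by
            simp [Finset.mem_filter, he₀, ht]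
          rw [if_congr hmem1 rfl rfl, if_congr hmem2 rfl rfl]
          linarith [hnet']

/-- Small positive multiple of a slack-compatible direction keeps feasibility. -/
lemma augment {g : E → ℝ} (hg : N.Feasible g) (χ : E → ℝ)
    (hs1 : ∀ e, 0 < χ e → g e < N.cap e) (hs2 : ∀ e, χ e < 0 → 0 < g e)
    (hcons : ∀ v : V,
      ∑ e ∈ (N.Ein ∪ N.Eint).filter (fun e => N.head e = v), χ e =
      ∑ e ∈ (N.Eout ∪ N.Eint).filter (fun e => N.tail e = v), χ e) :
    ∃ t : ℝ, 0 < t ∧ N.Feasible (fun e => g e + t * χ e) := by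
  classical
  set B : E → ℝ := fun e =>
    if 0 < χ e then (N.cap e - g e) / χ e else if χ e < 0 then g e / (-χ e) else 1 with hB
  have hBpos : ∀ e, 0 < B e := by
    intro e
    by_cases h1 : 0 < χ e
    · simp only [hB, if_pos h1]
      exact div_pos (by linarith [hs1 e h1]) h1
    · by_cases h2 : χ e < 0
      · simp only [hB, if_neg h1, if_pos h2]
        exact div_pos (hs2 e h2) (by linarith)
      · simp [hB, h1, h2]
  set s : Finset ℝ := insert 1 (Finset.univ.image B) with hs
  have hsne : s.Nonempty := ⟨1, Finset.mem_insert_self 1 _⟩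
  set t : ℝ := s.min' hsne with htdef
  have ht0 : 0 < t := by
    rw [htdef, Finset.lt_min'_iff]
    intro y hy
    rcases Finset.mem_insert.1 hy with rfl | hy
    · exact one_pos
    · obtain ⟨e, _, rfl⟩ := Finset.mem_image.1 hy
      exact hBpos e
  have htle : ∀ e, t ≤ B e := fun e =>
    Finset.min'_le s _ (Finset.mem_insert.2 (Or.inr (Finset.mem_image_of_mem B (Finset.mem_univ e))))
  refine ⟨t, ht0, fun e => ?_, fun e => ?_, fun v => ?_⟩
  · show 0 ≤ g e + t * χ e
    by_cases h2 : χ e < 0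
    · have hBe : B e = g e / (-χ e) := by simp [hB, not_lt.2 (le_of_lt h2), h2]
      have h3 := htle e
      rw [hBe, le_div_iff₀ (by linarith : (0:ℝ) < -χ e)] at h3
      nlinarith
    · nlinarith [mul_nonneg (le_of_lt ht0) (not_lt.1 h2), hg.1 e]
  · show g e + t * χ e ≤ N.cap e
    by_cases h1 : 0 < χ e
    · have hBe : B e = (N.cap e - g e) / χ e := by simp [hB, h1]
      have h3 := htle e
      rw [hBe, le_div_iff₀ h1] at h3
      nlinarith
    · nlinarith [mul_nonpos_of_nonneg_of_nonpos (le_of_lt ht0) (not_lt.1 h1), hg.2.1 e]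
  · have h1 := hg.2.2 v
    have h2 := hcons v
    have hsplit : ∀ s : Finset E, ∑ e ∈ s, (g e + t * χ e) =
        ∑ e ∈ s, g e + t * ∑ e ∈ s, χ e := by
      intro s; rw [Finset.sum_add_distrib, Finset.mul_sum]
    show ∑ e ∈ (N.Ein ∪ N.Eint).filter (fun e => N.head e = v), (g e + t * χ e) =
        ∑ e ∈ (N.Eout ∪ N.Eint).filter (fun e => N.tail e = v), (g e + t * χ e)
    rw [hsplit, hsplit, h1, h2]

/-- Cut inequality. -/
lemma cut_le (d : E → ℝ)
    (hcons : ∀ v : V,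
      ∑ e ∈ (N.Ein ∪ N.Eint).filter (fun e => N.head e = v), d e =
      ∑ e ∈ (N.Eout ∪ N.Eint).filter (fun e => N.tail e = v), d e)
    (p : V → Prop)
    (hcl1 : ∀ e ∈ N.Eint, p (N.head e) → 0 < d e → p (N.tail e))
    (hcl2 : ∀ e ∈ N.Eint, p (N.tail e) → d e < 0 → p (N.head e)) :
    ∑ e ∈ N.Eout.filter (fun e => p (N.tail e)), d e ≤
    ∑ e ∈ N.Ein.filter (fun e => p (N.head e)), d e := by
  classical
  have key : ∀ (s : Finset E) (gv : E → V),
      ∑ e ∈ s.filter (fun e => p (gv e)), d e =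
      ∑ v ∈ Finset.univ.filter p, ∑ e ∈ s.filter (fun e => gv e = v), d e := by
    intro s gv
    rw [Finset.sum_filter]
    rw [← Finset.sum_fiberwise s gv (fun e => if p (gv e) then d e else 0)]
    rw [Finset.sum_filter]
    refine Finset.sum_congr rfl fun v _ => ?_
    by_cases hpv : p v
    · rw [if_pos hpv]
      refine Finset.sum_congr rfl fun e he => ?_
      rw [if_pos ((Finset.mem_filter.1 he).2 ▸ hpv)]
    · rw [if_neg hpv]
      refine Finset.sum_eq_zero fun e he => ?_
      rw [if_neg ((Finset.mem_filter.1 he).2 ▸ hpv)]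
  -- summed conservation over p-vertices
  have hsum : ∑ e ∈ (N.Ein ∪ N.Eint).filter (fun e => p (N.head e)), d e =
      ∑ e ∈ (N.Eout ∪ N.Eint).filter (fun e => p (N.tail e)), d e := by
    rw [key, key]
    exact Finset.sum_congr rfl fun v _ => hcons v
  -- split unions
  rw [Finset.filter_union, Finset.filter_union] at hsum
  rw [Finset.sum_union (Finset.disjoint_filter_filter N.disj_in_int),
      Finset.sum_union (Finset.disjoint_filter_filter N.disj_out_int)] at hsum
  -- split internal sums by the other endpoint
  have hsplit1 : ∑ e ∈ N.Eint.filter (fun e => p (N.head e)), d e =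
      ∑ e ∈ (N.Eint.filter (fun e => p (N.head e))).filter (fun e => p (N.tail e)), d e +
      ∑ e ∈ (N.Eint.filter (fun e => p (N.head e))).filter (fun e => ¬ p (N.tail e)), d e :=
    (Finset.sum_filter_add_sum_filter_not _ _ _).symm
  have hsplit2 : ∑ e ∈ N.Eint.filter (fun e => p (N.tail e)), d e =
      ∑ e ∈ (N.Eint.filter (fun e => p (N.tail e))).filter (fun e => p (N.head e)), d e +
      ∑ e ∈ (N.Eint.filter (fun e => p (N.tail e))).filter (fun e => ¬ p (N.head e)), d e :=
    (Finset.sum_filter_add_sum_filter_not _ _ _).symm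
  have hcomm : (N.Eint.filter (fun e => p (N.head e))).filter (fun e => p (N.tail e)) =
      (N.Eint.filter (fun e => p (N.tail e))).filter (fun e => p (N.head e)) := by
    rw [Finset.filter_filter, Finset.filter_filter]
    exact Finset.filter_congr fun e _ => by tauto
  have hX : ∑ e ∈ (N.Eint.filter (fun e => p (N.head e))).filter (fun e => ¬ p (N.tail e)), d e ≤ 0 := by
    refine Finset.sum_nonpos fun e he => ?_
    simp only [Finset.mem_filter] at he
    by_contra h
    exact he.2 (hcl1 e he.1.1 he.1.2 (lt_of_not_ge h))
  have hY : 0 ≤ ∑ e ∈ (N.Eint.filter (fun e => p (N.tail e))).filter (fun e => ¬ p (N.head e)), d e := by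
    refine Finset.sum_nonneg fun e he => ?_
    simp only [Finset.mem_filter] at he
    by_contra h
    exact he.2 (hcl2 e he.1.1 he.1.2 (lt_of_not_ge h))
  rw [hsplit1, hsplit2, hcomm] at hsum
  linarith

end Aux2

section Aux3

set_option linter.unusedSectionVars false
set_option maxHeartbeats 1000000

attribute [local instance] Classical.propDecidable

variable {V E : Type} [Fintype V] [Fintype E] [DecidableEq V] [DecidableEq E]
variable (N : FlowNetwork V E)

lemma mem_in_not_int {e : E} (he : e ∈ N.Ein) : e ∉ N.Eint :=
  Finset.disjoint_left.1 N.disj_in_int he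

lemma mem_out_not_int {e : E} (he : e ∈ N.Eout) : e ∉ N.Eint :=
  Finset.disjoint_left.1 N.disj_out_int he

lemma mem_in_not_out {e : E} (he : e ∈ N.Ein) : e ∉ N.Eout :=
  Finset.disjoint_left.1 N.disj_in_out he

/-- Augmentation with an input-edge source and output-edge sink. -/
lemma exists_aug_in {φ d : E → ℝ} (hφ : N.Feasible φ)
    (hl1 : ∀ e, 0 < d e → φ e < N.cap e) (hl2 : ∀ e, d e < 0 → 0 < φ e)
    {a b : E} (ha : a ∈ N.Ein) (hb : b ∈ N.Eout)
    (hda : 0 < d a) (hdb : 0 < d b)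
    (hpath : Relation.ReflTransGen (N.Rel d) (N.head a) (N.tail b)) :
    ∃ t : ℝ, 0 < t ∧ ∃ φ' : E → ℝ, N.Feasible φ' ∧ φ' a = φ a + t ∧ φ' b = φ b + t ∧
      ∀ e, e ≠ a → e ≠ b → e ∉ N.Eint → φ' e = φ e := by
  obtain ⟨θ, hz, hp, hn, hnet⟩ := N.exists_theta d hpath
  have hab : a ≠ b := fun h => (N.mem_in_not_out ha) (h ▸ hb)
  have haint : a ∉ N.Eint := N.mem_in_not_int ha
  have hbint : b ∉ N.Eint := N.mem_out_not_int hb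
  set χ : E → ℝ := fun e => θ e + ((if e = a then 1 else 0) + (if e = b then 1 else 0)) with hχ
  have hχa : χ a = 1 := by simp [hχ, hz a haint, hab]
  have hχb : χ b = 1 := by simp [hχ, hz b hbint, Ne.symm hab]
  have hχint : ∀ e ∈ N.Eint, χ e = θ e := by
    intro e he
    have h1 : e ≠ a := fun h => haint (h ▸ he)
    have h2 : e ≠ b := fun h => hbint (h ▸ he)
    simp [hχ, h1, h2]
  have hχother : ∀ e, e ≠ a → e ≠ b → e ∉ N.Eint → χ e = 0 := by
    intro e h1 h2 h3; simp [hχ, h1, h2, hz e h3]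
  have hs1 : ∀ e, 0 < χ e → φ e < N.cap e := by
    intro e he
    by_cases h1 : e = a
    · exact h1 ▸ hl1 a hda
    by_cases h2 : e = b
    · exact h2 ▸ hl1 b hdb
    by_cases h3 : e ∈ N.Eint
    · exact hl1 e (hp e (by rwa [hχint e h3] at he))
    · rw [hχother e h1 h2 h3] at he; exact absurd he (lt_irrefl 0)
  have hs2 : ∀ e, χ e < 0 → 0 < φ e := by
    intro e he
    by_cases h1 : e = a
    · rw [h1, hχa] at he; linarith
    by_cases h2 : e = b
    · rw [h2, hχb] at he; linarith
    by_cases h3 : e ∈ N.Eint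
    · exact hl2 e (hn e (by rwa [hχint e h3] at he))
    · rw [hχother e h1 h2 h3] at he; exact absurd he (lt_irrefl 0)
  have hcons : ∀ v : V,
      ∑ e ∈ (N.Ein ∪ N.Eint).filter (fun e => N.head e = v), χ e =
      ∑ e ∈ (N.Eout ∪ N.Eint).filter (fun e => N.tail e = v), χ e := by
    intro v
    rw [Finset.filter_union, Finset.filter_union,
        Finset.sum_union (Finset.disjoint_filter_filter N.disj_in_int),
        Finset.sum_union (Finset.disjoint_filter_filter N.disj_out_int)]
    have h1 : ∑ e ∈ N.Ein.filter (fun e => N.head e = v), χ e =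
        if N.head a = v then 1 else 0 := by
      rw [show ∑ e ∈ N.Ein.filter (fun e => N.head e = v), χ e =
          ∑ e ∈ N.Ein.filter (fun e => N.head e = v), (if e = a then (1:ℝ) else 0) from
        Finset.sum_congr rfl fun e he => by
          by_cases h : e = a
          · rw [h, hχa, if_pos rfl]
          · have heE := (Finset.mem_filter.1 he).1
            rw [hχother e h (fun hh => (N.mem_in_not_out heE) (hh ▸ hb)) (N.mem_in_not_int heE),
              if_neg h]]
      rw [Finset.sum_ite_eq' _ a (fun _ => (1:ℝ))]
      simp [Finset.mem_filter, ha]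
    have h2 : ∑ e ∈ N.Eout.filter (fun e => N.tail e = v), χ e =
        if N.tail b = v then 1 else 0 := by
      rw [show ∑ e ∈ N.Eout.filter (fun e => N.tail e = v), χ e =
          ∑ e ∈ N.Eout.filter (fun e => N.tail e = v), (if e = b then (1:ℝ) else 0) from
        Finset.sum_congr rfl fun e he => by
          by_cases h : e = b
          · rw [h, hχb, if_pos rfl]
          · have heE := (Finset.mem_filter.1 he).1
            rw [hχother e (fun hh => (N.mem_in_not_out ha) (hh ▸ heE)) h (N.mem_out_not_int heE),
              if_neg h]]
      rw [Finset.sum_ite_eq' _ b (fun _ => (1:ℝ))]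
      simp [Finset.mem_filter, hb]
    have h3 : ∑ e ∈ N.Eint.filter (fun e => N.head e = v), χ e =
        ∑ e ∈ N.Eint.filter (fun e => N.head e = v), θ e :=
      Finset.sum_congr rfl fun e he => hχint e (Finset.mem_filter.1 he).1
    have h4 : ∑ e ∈ N.Eint.filter (fun e => N.tail e = v), χ e =
        ∑ e ∈ N.Eint.filter (fun e => N.tail e = v), θ e :=
      Finset.sum_congr rfl fun e he => hχint e (Finset.mem_filter.1 he).1
    rw [h1, h2, h3, h4]
    linarith [hnet v]
  obtain ⟨t, ht0, hfeas⟩ := N.augment hφ χ hs1 hs2 hcons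
  refine ⟨t, ht0, fun e => φ e + t * χ e, hfeas,
    by show φ a + t * χ a = φ a + t; rw [hχa]; ring,
    by show φ b + t * χ b = φ b + t; rw [hχb]; ring, ?_⟩
  intro e h1 h2 h3
  show φ e + t * χ e = φ e
  rw [hχother e h1 h2 h3]; ring

/-- Augmentation with an output-edge source (rerouting) and output-edge sink. -/
lemma exists_aug_out {φ d : E → ℝ} (hφ : N.Feasible φ)
    (hl1 : ∀ e, 0 < d e → φ e < N.cap e) (hl2 : ∀ e, d e < 0 → 0 < φ e)
    {b b' : E} (hb : b ∈ N.Eout) (hb' : b' ∈ N.Eout)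
    (hdb : d b < 0) (hdb' : 0 < d b')
    (hpath : Relation.ReflTransGen (N.Rel d) (N.tail b) (N.tail b')) :
    ∃ t : ℝ, 0 < t ∧ ∃ φ' : E → ℝ, N.Feasible φ' ∧ φ' b = φ b - t ∧ φ' b' = φ b' + t ∧
      ∀ e, e ≠ b → e ≠ b' → e ∉ N.Eint → φ' e = φ e := by
  obtain ⟨θ, hz, hp, hn, hnet⟩ := N.exists_theta d hpath
  have hab : b ≠ b' := fun h => absurd (h ▸ hdb) (not_lt.2 (le_of_lt hdb'))
  have haint : b ∉ N.Eint := N.mem_out_not_int hb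
  have hbint : b' ∉ N.Eint := N.mem_out_not_int hb'
  set χ : E → ℝ := fun e => θ e + ((if e = b then -1 else 0) + (if e = b' then 1 else 0)) with hχ
  have hχa : χ b = -1 := by simp [hχ, hz b haint, hab]
  have hχb : χ b' = 1 := by simp [hχ, hz b' hbint, Ne.symm hab]
  have hχint : ∀ e ∈ N.Eint, χ e = θ e := by
    intro e he
    have h1 : e ≠ b := fun h => haint (h ▸ he)
    have h2 : e ≠ b' := fun h => hbint (h ▸ he)
    simp [hχ, h1, h2]
  have hχother : ∀ e, e ≠ b → e ≠ b' → e ∉ N.Eint → χ e = 0 := by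
    intro e h1 h2 h3; simp [hχ, h1, h2, hz e h3]
  have hs1 : ∀ e, 0 < χ e → φ e < N.cap e := by
    intro e he
    by_cases h1 : e = b
    · rw [h1, hχa] at he; linarith
    by_cases h2 : e = b'
    · exact h2 ▸ hl1 b' hdb'
    by_cases h3 : e ∈ N.Eint
    · exact hl1 e (hp e (by rwa [hχint e h3] at he))
    · rw [hχother e h1 h2 h3] at he; exact absurd he (lt_irrefl 0)
  have hs2 : ∀ e, χ e < 0 → 0 < φ e := by
    intro e he
    by_cases h1 : e = b
    · exact h1 ▸ hl2 b hdb
    by_cases h2 : e = b'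
    · rw [h2, hχb] at he; linarith
    by_cases h3 : e ∈ N.Eint
    · exact hl2 e (hn e (by rwa [hχint e h3] at he))
    · rw [hχother e h1 h2 h3] at he; exact absurd he (lt_irrefl 0)
  have hcons : ∀ v : V,
      ∑ e ∈ (N.Ein ∪ N.Eint).filter (fun e => N.head e = v), χ e =
      ∑ e ∈ (N.Eout ∪ N.Eint).filter (fun e => N.tail e = v), χ e := by
    intro v
    rw [Finset.filter_union, Finset.filter_union,
        Finset.sum_union (Finset.disjoint_filter_filter N.disj_in_int),
        Finset.sum_union (Finset.disjoint_filter_filter N.disj_out_int)]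
    have h1 : ∑ e ∈ N.Ein.filter (fun e => N.head e = v), χ e = 0 := by
      refine Finset.sum_eq_zero fun e he => ?_
      have heE := (Finset.mem_filter.1 he).1
      exact hχother e (fun hh => (N.mem_in_not_out heE) (hh ▸ hb))
        (fun hh => (N.mem_in_not_out heE) (hh ▸ hb')) (N.mem_in_not_int heE)
    have h2 : ∑ e ∈ N.Eout.filter (fun e => N.tail e = v), χ e =
        (if N.tail b' = v then (1:ℝ) else 0) - (if N.tail b = v then (1:ℝ) else 0) := by
      rw [show ∑ e ∈ N.Eout.filter (fun e => N.tail e = v), χ e =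
          ∑ e ∈ N.Eout.filter (fun e => N.tail e = v),
            ((if e = b then (-1:ℝ) else 0) + (if e = b' then (1:ℝ) else 0)) from
        Finset.sum_congr rfl fun e he => by
          by_cases h : e = b
          · rw [h, hχa, if_pos rfl, if_neg hab]; ring
          · by_cases h' : e = b'
            · rw [h', hχb, if_neg (Ne.symm hab), if_pos rfl]; ring
            · have heE := (Finset.mem_filter.1 he).1
              rw [hχother e h h' (N.mem_out_not_int heE), if_neg h, if_neg h']; ring]
      rw [Finset.sum_add_distrib, Finset.sum_ite_eq' _ b (fun _ => (-1:ℝ)),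
        Finset.sum_ite_eq' _ b' (fun _ => (1:ℝ))]
      by_cases hbv : N.tail b = v <;> by_cases hbv' : N.tail b' = v <;>
        simp [Finset.mem_filter, hb, hb', hbv, hbv']
    have h3 : ∑ e ∈ N.Eint.filter (fun e => N.head e = v), χ e =
        ∑ e ∈ N.Eint.filter (fun e => N.head e = v), θ e :=
      Finset.sum_congr rfl fun e he => hχint e (Finset.mem_filter.1 he).1
    have h4 : ∑ e ∈ N.Eint.filter (fun e => N.tail e = v), χ e =
        ∑ e ∈ N.Eint.filter (fun e => N.tail e = v), θ e :=
      Finset.sum_congr rfl fun e he => hχint e (Finset.mem_filter.1 he).1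
    rw [h1, h2, h3, h4]
    linarith [hnet v]
  obtain ⟨t, ht0, hfeas⟩ := N.augment hφ χ hs1 hs2 hcons
  refine ⟨t, ht0, fun e => φ e + t * χ e, hfeas,
    by show φ b + t * χ b = φ b - t; rw [hχa]; ring,
    by show φ b' + t * χ b' = φ b' + t; rw [hχb]; ring, ?_⟩
  intro e h1 h2 h3
  show φ e + t * χ e = φ e
  rw [hχother e h1 h2 h3]; ring

end Aux3

section Aux4

set_option linter.unusedSectionVars false
set_option maxHeartbeats 1000000

attribute [local instance] Classical.propDecidable

variable {V E : Type} [Fintype V] [Fintype E] [DecidableEq V] [DecidableEq E]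
variable (N : FlowNetwork V E)

/-- Vertices that can reach the tail of a `d`-positive `B2`-edge through the residual graph. -/
def ReachB2 (d : E → ℝ) (B2 : Finset E) : V → Prop :=
  fun v => ∃ b ∈ B2, 0 < d b ∧ Relation.ReflTransGen (N.Rel d) v (N.tail b)

lemma sumB2_nonpos (d : E → ℝ) (B2 : Finset E) (hB2 : B2 ⊆ N.Eout)
    (hdcons : ∀ v : V,
      ∑ e ∈ (N.Ein ∪ N.Eint).filter (fun e => N.head e = v), d e =
      ∑ e ∈ (N.Eout ∪ N.Eint).filter (fun e => N.tail e = v), d e)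
    (hin : ∀ a ∈ N.Ein, N.ReachB2 d B2 (N.head a) → d a ≤ 0)
    (hout : ∀ b ∈ N.Eout, b ∉ B2 → N.ReachB2 d B2 (N.tail b) → 0 ≤ d b) :
    ∑ e ∈ B2, d e ≤ 0 := by
  set p : V → Prop := N.ReachB2 d B2 with hp
  have hcl1 : ∀ e ∈ N.Eint, p (N.head e) → 0 < d e → p (N.tail e) := by
    rintro e he ⟨b, hbB, hdb, hpath⟩ hde
    exact ⟨b, hbB, hdb, Relation.ReflTransGen.head ⟨e, he, Or.inl ⟨rfl, rfl, hde⟩⟩ hpath⟩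
  have hcl2 : ∀ e ∈ N.Eint, p (N.tail e) → d e < 0 → p (N.head e) := by
    rintro e he ⟨b, hbB, hdb, hpath⟩ hde
    exact ⟨b, hbB, hdb, Relation.ReflTransGen.head ⟨e, he, Or.inr ⟨rfl, rfl, hde⟩⟩ hpath⟩
  have hcut := N.cut_le d hdcons p hcl1 hcl2
  have hinle : ∑ e ∈ N.Ein.filter (fun e => p (N.head e)), d e ≤ 0 :=
    Finset.sum_nonpos fun e he => hin e (Finset.mem_filter.1 he).1 (Finset.mem_filter.1 he).2
  -- split the Eout sum
  have hsplitE : N.Eout = B2 ∪ (N.Eout \ B2) := (Finset.union_sdiff_of_subset hB2).symm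
  have hdisj2 : Disjoint B2 (N.Eout \ B2) := Finset.disjoint_sdiff
  have houtsum : ∑ e ∈ N.Eout.filter (fun e => p (N.tail e)), d e =
      ∑ e ∈ B2.filter (fun e => p (N.tail e)), d e +
      ∑ e ∈ (N.Eout \ B2).filter (fun e => p (N.tail e)), d e := by
    conv_lhs => rw [hsplitE]
    rw [Finset.filter_union, Finset.sum_union (Finset.disjoint_filter_filter hdisj2)]
  have hrest : 0 ≤ ∑ e ∈ (N.Eout \ B2).filter (fun e => p (N.tail e)), d e := by
    refine Finset.sum_nonneg fun e he => ?_
    have h1 := Finset.mem_filter.1 he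
    have h2 := Finset.mem_sdiff.1 h1.1
    exact hout e h2.1 h2.2 h1.2
  have hB2p : ∑ e ∈ B2.filter (fun e => p (N.tail e)), d e ≤ 0 := by linarith
  have hB2np : ∑ e ∈ B2.filter (fun e => ¬ p (N.tail e)), d e ≤ 0 := by
    refine Finset.sum_nonpos fun e he => ?_
    have h1 := Finset.mem_filter.1 he
    by_contra h
    exact h1.2 ⟨e, h1.1, lt_of_not_ge h, Relation.ReflTransGen.refl⟩
  calc ∑ e ∈ B2, d e
      = ∑ e ∈ B2.filter (fun e => p (N.tail e)), d e +
        ∑ e ∈ B2.filter (fun e => ¬ p (N.tail e)), d e :=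
        (Finset.sum_filter_add_sum_filter_not _ _ _).symm
    _ ≤ 0 := by linarith

/-- difference of conserved flows is conserved -/
lemma sub_conserve {f1 f2 : E → ℝ}
    (h1 : ∀ v : V,
      ∑ e ∈ (N.Ein ∪ N.Eint).filter (fun e => N.head e = v), f1 e =
      ∑ e ∈ (N.Eout ∪ N.Eint).filter (fun e => N.tail e = v), f1 e)
    (h2 : ∀ v : V,
      ∑ e ∈ (N.Ein ∪ N.Eint).filter (fun e => N.head e = v), f2 e =
      ∑ e ∈ (N.Eout ∪ N.Eint).filter (fun e => N.tail e = v), f2 e) :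
    ∀ v : V,
      ∑ e ∈ (N.Ein ∪ N.Eint).filter (fun e => N.head e = v), (f1 e - f2 e) =
      ∑ e ∈ (N.Eout ∪ N.Eint).filter (fun e => N.tail e = v), (f1 e - f2 e) := by
  intro v
  rw [Finset.sum_sub_distrib, Finset.sum_sub_distrib, h1 v, h2 v]

/-- For a flow to `B2`, the value over `B2` equals the value over `A`. -/
lemma sum_out_eq_sum_in {A B : Finset E} (hA : A ⊆ N.Ein) (hB : B ⊆ N.Eout)
    {f : E → ℝ} (hf : f ∈ N.FlowsTo A B) : ∑ e ∈ B, f e = ∑ e ∈ A, f e := by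
  have h1 : ∑ e ∈ N.Ein, f e = ∑ e ∈ N.Eout, f e := N.global_conserve hf.1.2.2
  have h2 : ∑ e ∈ N.Ein, f e = ∑ e ∈ A, f e :=
    sum_eq_of_vanish hA fun e he => hf.2 e (Finset.mem_union_left _ he)
  have h3 : ∑ e ∈ N.Eout, f e = ∑ e ∈ B, f e :=
    sum_eq_of_vanish hB fun e he => hf.2 e (Finset.mem_union_right _ he)
  rw [← h3, ← h1, h2]

/-- Lemma A: any feasible flow to `B1 ∪ B2` puts at most `maxFromTo A B2` onto `B2`. -/
lemma sumB2_le_max {A B1 B2 : Finset E} (hA : A ⊆ N.Ein) (hB1 : B1 ⊆ N.Eout)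
    (hB2 : B2 ⊆ N.Eout) {g : E → ℝ} (hg : g ∈ N.FlowsTo A (B1 ∪ B2)) :
    ∑ e ∈ B2, g e ≤ N.maxFromTo A B2 := by
  obtain ⟨h, hhmem, hhval, hhmax⟩ := N.exists_max_flowsTo A B2
  set d : E → ℝ := fun e => g e - h e with hd
  have hdcons := N.sub_conserve hg.1.2.2 hhmem.1.2.2
  have hl1 : ∀ e, 0 < d e → h e < N.cap e := fun e hde =>
    lt_of_lt_of_le (by simp only [hd] at hde; linarith) (hg.1.2.1 e)
  have hl2 : ∀ e, d e < 0 → 0 < h e := fun e hde =>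
    lt_of_le_of_lt (hg.1.1 e) (by simp only [hd] at hde; linarith)
  have hin : ∀ a ∈ N.Ein, N.ReachB2 d B2 (N.head a) → d a ≤ 0 := by
    intro a haE hpa
    by_contra hda
    push_neg at hda
    have haA : a ∈ A := by
      by_contra haA
      have h1 : g a = 0 := hg.2 a (Finset.mem_union_left _ (Finset.mem_sdiff.2 ⟨haE, haA⟩))
      have h2 : h a = 0 := hhmem.2 a (Finset.mem_union_left _ (Finset.mem_sdiff.2 ⟨haE, haA⟩))
      rw [hd] at hda; simp only [h1, h2, sub_zero] at hda; linarith
    obtain ⟨b, hbB, hdb, hpath⟩ := hpa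
    obtain ⟨t, ht0, h', hfeas, hh'a, hh'b, hother⟩ :=
      N.exists_aug_in hhmem.1 hl1 hl2 haE (hB2 hbB) hda hdb hpath
    have hmem' : h' ∈ N.FlowsTo A B2 := by
      refine ⟨hfeas, fun e he => ?_⟩
      have h0 : h e = 0 := hhmem.2 e he
      rcases Finset.mem_union.1 he with he1 | he1
      · have he1' := Finset.mem_sdiff.1 he1
        have hne1 : e ≠ a := fun h => he1'.2 (h ▸ haA)
        have hne2 : e ≠ b := fun h => N.mem_in_not_out he1'.1 (h ▸ hB2 hbB)
        rw [hother e hne1 hne2 (N.mem_in_not_int he1'.1), h0]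
      · have he1' := Finset.mem_sdiff.1 he1
        have hne2 : e ≠ b := fun h => he1'.2 (h ▸ hbB)
        have hne1 : e ≠ a := fun h => N.mem_in_not_out haE (h ▸ he1'.1)
        rw [hother e hne1 hne2 (N.mem_out_not_int he1'.1), h0]
    have hsum' : ∑ e ∈ A, h' e = ∑ e ∈ A, h e + t := by
      have : ∀ e ∈ A, h' e = h e + (if e = a then t else 0) := by
        intro e he
        by_cases h1 : e = a
        · rw [if_pos h1, h1, hh'a]
        · rw [if_neg h1, add_zero]
          exact hother e h1 (fun h => N.mem_in_not_out (hA he) (h ▸ hB2 hbB))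
            (N.mem_in_not_int (hA he))
      rw [Finset.sum_congr rfl this, Finset.sum_add_distrib,
        Finset.sum_ite_eq' A a (fun _ => t), if_pos haA]
    have := hhmax h' hmem'
    linarith
  have hout : ∀ b ∈ N.Eout, b ∉ B2 → N.ReachB2 d B2 (N.tail b) → 0 ≤ d b := by
    intro b hbE hbB _
    have h0 : h b = 0 := hhmem.2 b (Finset.mem_union_right _ (Finset.mem_sdiff.2 ⟨hbE, hbB⟩))
    simp only [hd, h0, sub_zero]
    exact hg.1.1 b
  have hfinal := N.sumB2_nonpos d B2 hB2 hdcons hin hout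
  have hhB2 : ∑ e ∈ B2, h e = N.maxFromTo A B2 := by
    rw [N.sum_out_eq_sum_in hA hB2 hhmem, hhval]
  have : ∑ e ∈ B2, d e = ∑ e ∈ B2, g e - ∑ e ∈ B2, h e := Finset.sum_sub_distrib g h
  linarith

end Aux4

section Aux5

set_option linter.unusedSectionVars false
set_option linter.unusedVariables false
set_option maxHeartbeats 1000000

attribute [local instance] Classical.propDecidable

variable {V E : Type} [Fintype V] [Fintype E] [DecidableEq V] [DecidableEq E]
variable (N : FlowNetwork V E)

/-- There is a maximum flow to `B1 ∪ B2` that simultaneously realizes the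
maximum flow value to `B2`. -/
lemma exists_lex {A B1 B2 : Finset E} (hA : A ⊆ N.Ein) (hB1 : B1 ⊆ N.Eout)
    (hB2 : B2 ⊆ N.Eout) (hdisj : Disjoint B1 B2) :
    ∃ g ∈ N.FlowsTo A (B1 ∪ B2), ∑ e ∈ A, g e = N.maxFromTo A (B1 ∪ B2) ∧
      ∑ e ∈ B2, g e = N.maxFromTo A B2 := by
  classical
  obtain ⟨g₀, hg₀mem, hg₀val, _⟩ := N.exists_max_flowsTo A (B1 ∪ B2)
  set K : Set (E → ℝ) :=
    N.FlowsTo A (B1 ∪ B2) ∩ {g | ∑ e ∈ A, g e = N.maxFromTo A (B1 ∪ B2)} with hK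
  have hKc : IsCompact K :=
    (N.isCompact_flowsTo A (B1 ∪ B2)).inter_right
      (isClosed_eq (continuous_finset_sum _ fun e _ => continuous_apply e) continuous_const)
  have hKne : K.Nonempty := ⟨g₀, hg₀mem, hg₀val⟩
  obtain ⟨g, hgK, hgmax⟩ := hKc.exists_isMaxOn hKne
    (Continuous.continuousOn (continuous_finset_sum B2 fun e _ => continuous_apply e))
  refine ⟨g, hgK.1, hgK.2, le_antisymm (N.sumB2_le_max hA hB1 hB2 hgK.1) ?_⟩
  by_contra hcon
  push_neg at hcon
  -- a max flow to B2
  obtain ⟨h, hhmem, hhval, _⟩ := N.exists_max_flowsTo A B2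
  set d : E → ℝ := fun e => h e - g e with hd
  have hdcons := N.sub_conserve hhmem.1.2.2 hgK.1.1.2.2
  have hl1 : ∀ e, 0 < d e → g e < N.cap e := fun e hde =>
    lt_of_lt_of_le (by simp only [hd] at hde; linarith) (hhmem.1.2.1 e)
  have hl2 : ∀ e, d e < 0 → 0 < g e := fun e hde =>
    lt_of_le_of_lt (hhmem.1.1 e) (by simp only [hd] at hde; linarith)
  have hin : ∀ a ∈ N.Ein, N.ReachB2 d B2 (N.head a) → d a ≤ 0 := by
    intro a haE hpa
    by_contra hda
    push_neg at hda
    have haA : a ∈ A := by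
      by_contra haA
      have h1 : g a = 0 := hgK.1.2 a (Finset.mem_union_left _ (Finset.mem_sdiff.2 ⟨haE, haA⟩))
      have h2 : h a = 0 := hhmem.2 a (Finset.mem_union_left _ (Finset.mem_sdiff.2 ⟨haE, haA⟩))
      rw [hd] at hda; simp only [h1, h2, sub_zero] at hda; linarith
    obtain ⟨b, hbB, hdb, hpath⟩ := hpa
    obtain ⟨t, ht0, g', hfeas, hg'a, hg'b, hother⟩ :=
      N.exists_aug_in hgK.1.1 hl1 hl2 haE (hB2 hbB) hda hdb hpath
    have hmem' : g' ∈ N.FlowsTo A (B1 ∪ B2) := by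
      refine ⟨hfeas, fun e he => ?_⟩
      have h0 : g e = 0 := hgK.1.2 e he
      rcases Finset.mem_union.1 he with he1 | he1
      · have he1' := Finset.mem_sdiff.1 he1
        have hne1 : e ≠ a := fun hh => he1'.2 (hh ▸ haA)
        have hne2 : e ≠ b := fun hh => N.mem_in_not_out he1'.1 (hh ▸ hB2 hbB)
        rw [hother e hne1 hne2 (N.mem_in_not_int he1'.1), h0]
      · have he1' := Finset.mem_sdiff.1 he1
        have hne2 : e ≠ b := fun hh =>
          he1'.2 (hh ▸ Finset.mem_union_right _ hbB)
        have hne1 : e ≠ a := fun hh => N.mem_in_not_out haE (hh ▸ he1'.1)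
        rw [hother e hne1 hne2 (N.mem_out_not_int he1'.1), h0]
    have hsum' : ∑ e ∈ A, g' e = ∑ e ∈ A, g e + t := by
      have hcong : ∀ e ∈ A, g' e = g e + (if e = a then t else 0) := by
        intro e he
        by_cases h1 : e = a
        · rw [if_pos h1, h1, hg'a]
        · rw [if_neg h1, add_zero]
          exact hother e h1 (fun hh => N.mem_in_not_out (hA he) (hh ▸ hB2 hbB))
            (N.mem_in_not_int (hA he))
      rw [Finset.sum_congr rfl hcong, Finset.sum_add_distrib,
        Finset.sum_ite_eq' A a (fun _ => t), if_pos haA]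
    have hle := N.le_maxFromTo hmem'
    rw [hsum', hgK.2] at hle
    linarith
  have hout : ∀ b ∈ N.Eout, b ∉ B2 → N.ReachB2 d B2 (N.tail b) → 0 ≤ d b := by
    intro b hbE hbB2 hpb
    by_cases hbB1 : b ∈ B1
    swap
    · -- b in Eout \ (B1 ∪ B2): both vanish
      have h1 : g b = 0 := hgK.1.2 b (Finset.mem_union_right _
        (Finset.mem_sdiff.2 ⟨hbE, fun hh => (Finset.mem_union.1 hh).elim hbB1 hbB2⟩))
      have h2 : h b = 0 := hhmem.2 b (Finset.mem_union_right _
        (Finset.mem_sdiff.2 ⟨hbE, hbB2⟩))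
      simp [hd, h1, h2]
    -- b ∈ B1
    by_contra hdb
    push_neg at hdb
    obtain ⟨b', hb'B, hdb', hpath⟩ := hpb
    obtain ⟨t, ht0, g', hfeas, hg'b, hg'b', hother⟩ :=
      N.exists_aug_out hgK.1.1 hl1 hl2 hbE (hB2 hb'B) (lt_of_not_ge (fun hh => hh.not_gt hdb)) hdb' hpath
    have hbb' : b ≠ b' := fun hh => hbB2 (hh ▸ hb'B)
    have hmem' : g' ∈ N.FlowsTo A (B1 ∪ B2) := by
      refine ⟨hfeas, fun e he => ?_⟩
      have h0 : g e = 0 := hgK.1.2 e he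
      rcases Finset.mem_union.1 he with he1 | he1
      · have he1' := Finset.mem_sdiff.1 he1
        have hne1 : e ≠ b := fun hh => N.mem_in_not_out he1'.1 (hh ▸ hbE)
        have hne2 : e ≠ b' := fun hh => N.mem_in_not_out he1'.1 (hh ▸ hB2 hb'B)
        rw [hother e hne1 hne2 (N.mem_in_not_int he1'.1), h0]
      · have he1' := Finset.mem_sdiff.1 he1
        have hne1 : e ≠ b := fun hh => he1'.2 (hh ▸ Finset.mem_union_left _ hbB1)
        have hne2 : e ≠ b' := fun hh => he1'.2 (hh ▸ Finset.mem_union_right _ hb'B)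
        rw [hother e hne1 hne2 (N.mem_out_not_int he1'.1), h0]
    have hsumA : ∑ e ∈ A, g' e = ∑ e ∈ A, g e := by
      refine Finset.sum_congr rfl fun e he => ?_
      exact hother e (fun hh => N.mem_in_not_out (hA he) (hh ▸ hbE))
        (fun hh => N.mem_in_not_out (hA he) (hh ▸ hB2 hb'B)) (N.mem_in_not_int (hA he))
    have hsumB2 : ∑ e ∈ B2, g' e = ∑ e ∈ B2, g e + t := by
      have hcong : ∀ e ∈ B2, g' e = g e + (if e = b' then t else 0) := by
        intro e he
        by_cases h1 : e = b'
        · rw [if_pos h1, h1, hg'b']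
        · rw [if_neg h1, add_zero]
          exact hother e (fun hh => (Finset.disjoint_right.1 hdisj he) (hh ▸ hbB1)) h1
            (N.mem_out_not_int (hB2 he))
      rw [Finset.sum_congr rfl hcong, Finset.sum_add_distrib,
        Finset.sum_ite_eq' B2 b' (fun _ => t), if_pos hb'B]
    have hK' : g' ∈ K := ⟨hmem', by
      simp only [Set.mem_setOf_eq]
      rw [hsumA]
      exact hgK.2⟩
    have := hgmax hK'
    simp only [Set.mem_setOf_eq] at this
    rw [hsumB2] at this
    linarith
  have hfinal := N.sumB2_nonpos d B2 hB2 hdcons hin hout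
  have hhB2 : ∑ e ∈ B2, h e = N.maxFromTo A B2 := by
    rw [N.sum_out_eq_sum_in hA hB2 hhmem, hhval]
  have hsub : ∑ e ∈ B2, d e = ∑ e ∈ B2, h e - ∑ e ∈ B2, g e := Finset.sum_sub_distrib h g
  linarith

end Aux5

set_option linter.unusedSectionVars false
set_option maxHeartbeats 1000000 in
/-- `maxFromToAft N (A,B1 | A,B2) = maxFromTo N A (B1 ∪ B2) - maxFromTo N A B2`. -/
theorem stmt6 (N : FlowNetwork V E) (A B1 B2 : Finset E)
    (hA : A ⊆ N.Ein) (hB1 : B1 ⊆ N.Eout) (hB2 : B2 ⊆ N.Eout)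
    (hdisj : Disjoint B1 B2) :
    N.maxFromToAftOut A B1 B2 = N.maxFromTo A (B1 ∪ B2) - N.maxFromTo A B2 := by
  classical
  have hB12 : B1 ∪ B2 ⊆ N.Eout := Finset.union_subset hB1 hB2
  set M12 := N.maxFromTo A (B1 ∪ B2) with hM12
  set M2 := N.maxFromTo A B2 with hM2
  -- the lexicographically optimal flow
  obtain ⟨g, hgmem, hgA, hgB2⟩ := N.exists_lex hA hB1 hB2 hdisj
  have hgB1 : ∑ e ∈ B1, g e = M12 - M2 := by
    have h1 : ∑ e ∈ B1 ∪ B2, g e = ∑ e ∈ A, g e := N.sum_out_eq_sum_in hA hB12 hgmem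
    rw [Finset.sum_union hdisj] at h1
    rw [hgA, hgB2] at h1
    linarith
  have hM2nonneg : (0:ℝ) ≤ M2 := N.maxFromTo_nonneg A B2
  have hM2le : M2 ≤ M12 := by
    have : (0:ℝ) ≤ ∑ e ∈ B1, g e := Finset.sum_nonneg fun e _ => hgmem.1.1 e
    linarith
  -- the aft set
  have hgoal : IsGreatest {x : ℝ | ∃ f f' : E → ℝ, (∀ e, 0 ≤ f e) ∧ (∀ e, 0 ≤ f' e) ∧
      N.Feasible (f + f') ∧
      ∑ e ∈ A, f' e = N.maxFromTo A B2 ∧ ∑ e ∈ B2, f' e = N.maxFromTo A B2 ∧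
      (∀ e ∈ (N.Ein \ A) ∪ (N.Eout \ (B1 ∪ B2)), f e + f' e = 0) ∧
      x = ∑ e ∈ B1, f e} (M12 - M2) := by
    constructor
    · -- membership: construct the witness
      by_cases hM12z : M12 = 0
      · have hM2z : M2 = 0 := le_antisymm (hM12z ▸ hM2le) hM2nonneg
        refine ⟨fun _ => 0, fun _ => 0, fun e => le_refl 0, fun e => le_refl 0, ?_, ?_, ?_, ?_, ?_⟩
        · have hz : ((fun _ => (0:ℝ)) + (fun _ => (0:ℝ)) : E → ℝ) = fun _ => (0:ℝ) := by
            funext e; simp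
          rw [hz]; exact N.feasible_zero
        · rw [← hM2, hM2z]; simp
        · rw [← hM2, hM2z]; simp
        · intro e _; simp
        · rw [hM12z, hM2z]; simp
      · have hM12pos : 0 < M12 := lt_of_le_of_ne (le_trans hM2nonneg hM2le) (Ne.symm hM12z)
        set f' : E → ℝ := fun e => if e ∈ A then (M2 / M12) * g e else if e ∈ B2 then g e else 0
          with hf'
        set f : E → ℝ := fun e => g e - f' e with hf
        have hratio0 : 0 ≤ M2 / M12 := div_nonneg hM2nonneg (le_of_lt hM12pos)
        have hratio1 : M2 / M12 ≤ 1 := (div_le_one hM12pos).2 hM2le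
        have hf'nonneg : ∀ e, 0 ≤ f' e := by
          intro e
          by_cases h1 : e ∈ A
          · simp only [hf', if_pos h1]
            exact mul_nonneg hratio0 (hgmem.1.1 e)
          · by_cases h2 : e ∈ B2
            · simp only [hf', if_neg h1, if_pos h2]; exact hgmem.1.1 e
            · simp [hf', h1, h2]
        have hf'le : ∀ e, f' e ≤ g e := by
          intro e
          by_cases h1 : e ∈ A
          · simp only [hf', if_pos h1]
            nlinarith [hgmem.1.1 e]
          · by_cases h2 : e ∈ B2
            · simp [hf', h1, h2]
            · simp [hf', h1, h2]; exact hgmem.1.1 e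
        have hfnonneg : ∀ e, 0 ≤ f e := fun e => by
          simp only [hf]; linarith [hf'le e]
        have hsum : (f + f') = g := by
          funext e; simp [hf]
        refine ⟨f, f', hfnonneg, hf'nonneg, ?_, ?_, ?_, ?_, ?_⟩
        · rw [hsum]; exact hgmem.1
        · rw [← hM2]
          have : ∀ e ∈ A, f' e = (M2 / M12) * g e := fun e he => by
            simp [hf', he]
          rw [Finset.sum_congr rfl this, ← Finset.mul_sum, hgA, ← hM12]
          field_simp
        · rw [← hM2]
          have : ∀ e ∈ B2, f' e = g e := fun e he => by
            have h1 : e ∉ A := fun hh => N.mem_in_not_out (hA hh) (hB2 he)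
            simp [hf', h1, he]
          rw [Finset.sum_congr rfl this, hgB2]
        · intro e he
          have : f e + f' e = g e := by simp [hf]
          rw [this]
          exact hgmem.2 e he
        · have : ∀ e ∈ B1, f e = g e := by
            intro e he
            have h1 : e ∉ A := fun hh => N.mem_in_not_out (hA hh) (hB1 he)
            have h2 : e ∉ B2 := Finset.disjoint_left.1 hdisj he
            simp [hf, hf', h1, h2]
          rw [Finset.sum_congr rfl this, hgB1]
    · -- upper bound
      rintro x ⟨f, f', hf0, hf'0, hfeas, hf'A, hf'B2, hvan, rfl⟩
      have hmem : (f + f') ∈ N.FlowsTo A (B1 ∪ B2) := ⟨hfeas, fun e he => hvan e he⟩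
      have h1 : ∑ e ∈ A, (f + f') e ≤ M12 := N.le_maxFromTo hmem
      have h2 : ∑ e ∈ B1 ∪ B2, (f + f') e = ∑ e ∈ A, (f + f') e :=
        N.sum_out_eq_sum_in hA hB12 hmem
      rw [Finset.sum_union hdisj] at h2
      have h3 : ∀ s : Finset E, ∑ e ∈ s, (f + f') e = ∑ e ∈ s, f e + ∑ e ∈ s, f' e := by
        intro s
        rw [← Finset.sum_add_distrib]
        rfl
      rw [h3, h3, h3] at h2
      rw [h3] at h1
      have h4 : 0 ≤ ∑ e ∈ B1, f' e := Finset.sum_nonneg fun e _ => hf'0 e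
      have h5 : 0 ≤ ∑ e ∈ B2, f e := Finset.sum_nonneg fun e _ => hf0 e
      rw [← hM2] at hf'B2
      linarith
  exact hgoal.csSup_eq

end FlowNetwork
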